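/- Let G be a finite geodetic graph that is Hamiltonian (contains a cycle passing through every vertex exactly once). Then every vertex of G has at least two antipodes, i.e. for every vertex u there are at least two distinct vertices attaining the maximum distance from u. -/

import Mathlib

open SimpleGraph

/-- A graph is *geodetic* if it is connected and between any two vertices
there is exactly one shortest path (geodesic). -/
def IsGeodetic {V : Type*} (G : SimpleGraph V) : Prop :=
  G.Connected ∧ ∀ u v : V, ∃! p : G.Walk u v, p.IsPath ∧ p.length = G.dist u v

/-- `v` is an *antipode* of `u` if `v` is at maximum distance from `u`. -/
def IsAntipode {V : Type*} (G : SimpleGraph V) (u v : V) : Prop :=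
  ∀ w : V, G.dist u w ≤ G.dist u v

private lemma path_getVert_inj {V : Type*} {G : SimpleGraph V} {u v : V} (p : G.Walk u v)
    (hp : p.IsPath) : ∀ {i j : ℕ}, i ≤ p.length → j ≤ p.length →
      p.getVert i = p.getVert j → i = j := by
  induction p with
  | nil => intro i j hi hj _; simp [SimpleGraph.Walk.length_nil] at hi hj; omega
  | cons h p ih =>
    intro i j hi hj heq
    rw [SimpleGraph.Walk.cons_isPath_iff] at hp
    match i, j with
    | 0, 0 => rfl
    | 0, j+1 =>
      exfalso; apply hp.2
      rw [SimpleGraph.Walk.mem_support_iff_exists_getVert]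
      refine ⟨j, ?_, ?_⟩
      · simpa [SimpleGraph.Walk.getVert_cons_succ] using heq.symm
      · simp [SimpleGraph.Walk.length_cons] at hj; omega
    | i+1, 0 =>
      exfalso; apply hp.2
      rw [SimpleGraph.Walk.mem_support_iff_exists_getVert]
      refine ⟨i, ?_, ?_⟩
      · simpa [SimpleGraph.Walk.getVert_cons_succ] using heq
      · simp [SimpleGraph.Walk.length_cons] at hi; omega
    | i+1, j+1 =>
      have := ih hp.1 (i := i) (j := j)
        (by simp [SimpleGraph.Walk.length_cons] at hi; omega)
        (by simp [SimpleGraph.Walk.length_cons] at hj; omega)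
        (by simpa [SimpleGraph.Walk.getVert_cons_succ] using heq)
      omega

/-- A vertex on a cycle has two distinct neighbors. -/
private lemma two_neighbors {V : Type*} {G : SimpleGraph V} {x v : V} (c : G.Walk x x)
    (hc : c.IsCycle) (hv : v ∈ c.support) :
    ∃ a b : V, a ≠ b ∧ G.Adj v a ∧ G.Adj v b := by
  classical
  have hc' := hc.rotate hv
  set c' := c.rotate v hv with hc'def
  have hlen : 3 ≤ c'.length := hc'.three_le_length
  cases hd : c' with
  | nil => rw [hd] at hlen; simp at hlen
  | cons h q =>
    rw [hd] at hc' hlen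
    rw [SimpleGraph.Walk.cons_isCycle_iff] at hc'
    have hq : q.IsPath := hc'.1
    have hql : 2 ≤ q.length := by
      simp [SimpleGraph.Walk.length_cons] at hlen; omega
    refine ⟨_, q.getVert (q.length - 1), ?_, h, ?_⟩
    · intro hab
      have h0 : q.getVert 0 = q.getVert (q.length - 1) := by
        simpa using hab
      have := path_getVert_inj q hq (by omega) (by omega) h0
      omega
    · have := q.adj_getVert_succ (i := q.length - 1) (by omega)
      have h2 : q.length - 1 + 1 = q.length := by omega
      rw [h2, SimpleGraph.Walk.getVert_length] at this
      exact this.symm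

/-- In a finite geodetic Hamiltonian graph,
every vertex has at least two antipodes. -/
theorem stmt_17 {V : Type*} [Fintype V] (G : SimpleGraph V) (hG : IsGeodetic G)
    (hham : ∃ (x : V) (c : G.Walk x x), c.IsCycle ∧ ∀ w : V, w ∈ c.support) :
    ∀ u : V, ∃ v w : V, v ≠ w ∧ IsAntipode G u v ∧ IsAntipode G u w := by
  intro u
  obtain ⟨x0, c, hc, hsup⟩ := hham
  have hconn := hG.1
  obtain ⟨v, -, hv⟩ := Finset.exists_max_image Finset.univ (fun w => G.dist u w)
    ⟨u, Finset.mem_univ u⟩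
  have hant : IsAntipode G u v := fun w => hv w (Finset.mem_univ w)
  -- d ≥ 1
  obtain ⟨a0, b0, hab0, ha0, hb0⟩ := two_neighbors c hc (hsup u)
  have hd1 : 1 ≤ G.dist u v := by
    have h1 : 0 < G.dist u a0 := hconn.pos_dist_of_ne ha0.ne
    have := hant a0
    omega
  set d := G.dist u v with hddef
  -- two distinct neighbors of v
  obtain ⟨a, b, hab, hva, hvb⟩ := two_neighbors c hc (hsup v)
  -- if some neighbor w of v has dist u w = d, it is a second antipode
  by_cases hwa : G.dist u a = d
  · exact ⟨v, a, fun h => G.irrefl (h ▸ hva), hant, fun w => hwa ▸ hant w⟩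
  by_cases hwb : G.dist u b = d
  · exact ⟨v, b, fun h => G.irrefl (h ▸ hvb), hant, fun w => hwb ▸ hant w⟩
  -- otherwise both neighbors are at distance d - 1; derive a contradiction
  exfalso
  have key : ∀ w : V, G.Adj v w → G.dist u w ≠ d → G.dist u w = d - 1 := by
    intro w hvw hne
    have h1 : G.dist u w ≤ d := hant w
    have h2 : d ≤ G.dist u w + 1 := by
      have htri : G.dist u v ≤ G.dist u w + G.dist w v := hconn.dist_triangle
      have hwv : G.dist w v ≤ 1 := by
        have := G.dist_le (SimpleGraph.Walk.cons hvw.symm SimpleGraph.Walk.nil)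
        simpa using this
      omega
    omega
  have hda : G.dist u a = d - 1 := key a hva hwa
  have hdb : G.dist u b = d - 1 := key b hvb hwb
  obtain ⟨pa, hpa, hpal⟩ := hconn.exists_path_of_dist u a
  obtain ⟨pb, hpb, hpbl⟩ := hconn.exists_path_of_dist u b
  have hvnotin : ∀ (w : V) (p : G.Walk u w), p.IsPath → p.length = d - 1 → v ∉ p.support := by
    classical
    intro w p _ hpl hmem
    have h1 : G.dist u v ≤ (p.takeUntil v hmem).length := G.dist_le _
    have h2 : (p.takeUntil v hmem).length ≤ p.length := SimpleGraph.Walk.length_takeUntil_le p hmem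
    omega
  have hgeo : ∀ (w : V) (p : G.Walk u w) (hadj : G.Adj w v), p.IsPath → p.length = d - 1 →
      (p.concat hadj).IsPath ∧ (p.concat hadj).length = G.dist u v := by
    intro w p hadj hp hpl
    refine ⟨?_, ?_⟩
    · rw [← SimpleGraph.Walk.isPath_reverse_iff, SimpleGraph.Walk.reverse_concat,
        SimpleGraph.Walk.cons_isPath_iff]
      refine ⟨hp.reverse, ?_⟩
      rw [SimpleGraph.Walk.support_reverse, List.mem_reverse]
      exact hvnotin w p hp hpl
    · rw [SimpleGraph.Walk.length_concat, hpl]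
      omega
  have hga := hgeo a pa hva.symm hpa (hpal.trans hda)
  have hgb := hgeo b pb hvb.symm hpb (hpbl.trans hdb)
  obtain ⟨p, -, hup⟩ := hG.2 u v
  have heq : pa.concat hva.symm = pb.concat hvb.symm :=
    (hup _ hga).trans (hup _ hgb).symm
  apply hab
  have := congrArg (fun q => q.reverse.getVert 1) heq
  simpa [SimpleGraph.Walk.reverse_concat, SimpleGraph.Walk.getVert_cons_succ] using this
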